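/- Let b > 1 be an integer, σ > 0 a real number, k an integer, and set s = σ + 2πik/log b. Then for every integer m ≥ 0 there holds the equality |c*_{m,b}(s)| = (|(s+1)_m|/(σ+1)_m) · c*_{m,b}(σ), where (z)_m = z(z+1)⋯(z+m−1) denotes the Pochhammer symbol. -/
import Mathlib


open Finset

/-- γ_{j,b} = ∑_{a=1}^{b-1} a^j for a natural exponent j. -/
def gammaNat (b j : ℕ) : ℕ := ∑ a ∈ Finset.Ico 1 b, a ^ j

/-- The coefficients c*_{m,b}(s): c*_{0,b}(s) = 1 and, for m ≥ 1,
c*_{m,b}(s) = (1/(b^{s+m} − b)) ∑_{j=1}^{m} [(s+m)⋯(s+m−j+1)/j!] γ_{j,b} c*_{m−j,b}(s). -/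
noncomputable def cstarC (b : ℕ) (s : ℂ) : ℕ → ℂ
  | 0 => 1
  | (m + 1) =>
      (1 / ((b : ℂ) ^ (s + (m : ℂ) + 1) - (b : ℂ))) *
        ∑ j ∈ Finset.range (m + 1),
          ((∏ i ∈ Finset.range (j + 1), (s + (m : ℂ) + 1 - (i : ℂ))) / (Nat.factorial (j + 1) : ℂ))
            * (gammaNat b (j + 1) : ℂ) * cstarC b s (m - j)
  decreasing_by exact Nat.lt_succ_of_le (Nat.sub_le m j)

/-- The coefficients c*_{m,b}(σ) for real σ (real-valued version of the same recurrence). -/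
noncomputable def cstarR (b : ℕ) (σ : ℝ) : ℕ → ℝ
  | 0 => 1
  | (m + 1) =>
      (1 / ((b : ℝ) ^ (σ + (m : ℝ) + 1) - (b : ℝ))) *
        ∑ j ∈ Finset.range (m + 1),
          ((∏ i ∈ Finset.range (j + 1), (σ + (m : ℝ) + 1 - (i : ℝ))) / (Nat.factorial (j + 1) : ℝ))
            * (gammaNat b (j + 1) : ℝ) * cstarR b σ (m - j)
  decreasing_by exact Nat.lt_succ_of_le (Nat.sub_le m j)

lemma prod_split {R : Type*} [Field R] [CharZero R] (z : R) (m j : ℕ) (hj : j ≤ m) :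
    (∏ i ∈ range (m - j), (z + 1 + (i : R))) *
      (∏ i ∈ range (j + 1), (z + (m : R) + 1 - (i : R))) =
      ∏ i ∈ range (m + 1), (z + 1 + (i : R)) := by
  have h1 : ∏ i ∈ range (j + 1), (z + (m : R) + 1 - (i : R)) =
      ∏ i ∈ range (j + 1), (z + 1 + ((m - j + i : ℕ) : R)) := by
    rw [← Finset.prod_range_reflect]
    refine Finset.prod_congr rfl fun i hi => ?_
    simp only [Finset.mem_range] at hi
    have hi' : i ≤ j := by omega
    have h2 : j + 1 - 1 - i = j - i := by omega
    rw [h2]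
    have h3 : ((j - i : ℕ) : R) = (j : R) - i := by
      push_cast [Nat.cast_sub hi']; ring
    have hm : ((m - j + i : ℕ) : R) = (m : R) - j + i := by
      push_cast [Nat.cast_sub hj]; ring
    rw [h3, hm]; ring
  rw [h1]
  have h4 := Finset.prod_range_add (fun i : ℕ => z + 1 + (i : R)) (m - j) (j + 1)
  have hmj : m - j + (j + 1) = m + 1 := by omega
  rw [hmj] at h4
  rw [h4]

lemma cstarR_nonneg (b : ℕ) (hb : 1 < b) (σ : ℝ) (hσ : 0 < σ) (m : ℕ) :
    0 ≤ cstarR b σ m := by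
  induction m using Nat.strong_induction_on with
  | _ m IH =>
    match m with
    | 0 => simp [cstarR]
    | (m + 1) =>
      rw [cstarR]
      have hb1 : (1 : ℝ) < (b : ℝ) := by exact_mod_cast hb
      have hB : (b : ℝ) < (b : ℝ) ^ (σ + (m : ℝ) + 1) := by
        nth_rewrite 1 [show (b : ℝ) = (b : ℝ) ^ (1 : ℝ) by rw [Real.rpow_one]]
        exact (Real.rpow_lt_rpow_left_iff hb1).mpr
          (by have : (0:ℝ) ≤ (m:ℝ) := Nat.cast_nonneg m; linarith)
      have h0 : (0:ℝ) < (b : ℝ) ^ (σ + (m : ℝ) + 1) - b := by linarith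
      apply mul_nonneg
      · positivity
      · apply Finset.sum_nonneg
        intro j hj
        simp only [Finset.mem_range] at hj
        apply mul_nonneg
        apply mul_nonneg
        · apply div_nonneg
          · apply Finset.prod_nonneg
            intro i hi
            simp only [Finset.mem_range] at hi
            have hij : (i : ℝ) ≤ (m : ℝ) := by exact_mod_cast (by omega : i ≤ m)
            linarith
          · positivity
        · positivity
        · exact IH (m - j) (Nat.lt_succ_of_le (Nat.sub_le m j))

lemma cstar_key (b : ℕ) (σ : ℝ) (s : ℂ)
    (hpow : ∀ n : ℕ, (b : ℂ) ^ (s + (n : ℂ) + 1) = (((b : ℝ) ^ (σ + (n : ℝ) + 1) : ℝ) : ℂ))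
    (m : ℕ) :
    cstarC b s m * (∏ i ∈ range m, ((σ : ℂ) + 1 + (i : ℂ))) =
      (∏ i ∈ range m, (s + 1 + (i : ℂ))) * ((cstarR b σ m : ℝ) : ℂ) := by
  induction m using Nat.strong_induction_on with
  | _ m IH =>
    match m with
    | 0 => simp [cstarC, cstarR]
    | (m + 1) =>
      rw [cstarC, cstarR, hpow m]
      push_cast
      set B : ℂ := (((b : ℝ) ^ (σ + (m : ℝ) + 1) : ℝ) : ℂ) - (b : ℂ) with hB
      have h : (∑ j ∈ Finset.range (m + 1),
            ((∏ i ∈ Finset.range (j + 1), (s + (m : ℂ) + 1 - (i : ℂ))) / (Nat.factorial (j + 1) : ℂ))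
              * (gammaNat b (j + 1) : ℂ) * cstarC b s (m - j)) *
            (∏ i ∈ range (m + 1), ((σ : ℂ) + 1 + (i : ℂ))) =
          (∏ i ∈ range (m + 1), (s + 1 + (i : ℂ))) *
            ∑ j ∈ Finset.range (m + 1),
              ((∏ i ∈ Finset.range (j + 1), ((σ : ℂ) + (m : ℂ) + 1 - (i : ℂ))) / (Nat.factorial (j + 1) : ℂ))
                * (gammaNat b (j + 1) : ℂ) * ((cstarR b σ (m - j) : ℝ) : ℂ) := by
        rw [Finset.sum_mul, Finset.mul_sum]
        refine Finset.sum_congr rfl fun j hj => ?_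
        simp only [Finset.mem_range] at hj
        have hj' : j ≤ m := Nat.lt_succ_iff.mp hj
        have hsplitC := prod_split s m j hj'
        have hsplitS := prod_split ((σ : ℂ)) m j hj'
        have hIH := IH (m - j) (Nat.lt_succ_of_le (Nat.sub_le m j))
        rw [← hsplitC, ← hsplitS]
        linear_combination
          ((∏ i ∈ range (j + 1), (s + (m : ℂ) + 1 - (i : ℂ))) *
            (∏ i ∈ range (j + 1), ((σ : ℂ) + (m : ℂ) + 1 - (i : ℂ))) *
            (gammaNat b (j + 1) : ℂ) / (Nat.factorial (j + 1) : ℂ)) * hIH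
      linear_combination (1 / B) * h

/-- For b > 1, σ > 0, k ∈ ℤ and s = σ + 2πik/log b, for every m ≥ 0 there is equality
|c*_{m,b}(s)| = (|(s+1)_m|/(σ+1)_m) · c*_{m,b}(σ). -/
theorem cstar_abs_eq_on_special_line (b : ℕ) (hb : 1 < b) (σ : ℝ) (hσ : 0 < σ) (k : ℤ)
    (s : ℂ) (hs : s = (σ : ℂ) + 2 * Real.pi * Complex.I * (k : ℂ) / (Real.log b : ℂ)) (m : ℕ) :
    ‖cstarC b s m‖ =
      (‖∏ i ∈ Finset.range m, (s + 1 + (i : ℂ))‖ / ∏ i ∈ Finset.range m, (σ + 1 + (i : ℝ))) *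
        cstarR b σ m := by

  have hb1 : (1 : ℝ) < (b : ℝ) := by exact_mod_cast hb
  have hb0 : (0 : ℝ) < (b : ℝ) := by linarith
  have hbne : (b : ℂ) ≠ 0 := by exact_mod_cast (show (b : ℝ) ≠ 0 by linarith)
  have hlog : Real.log b ≠ 0 := ne_of_gt (Real.log_pos hb1)
  have hpow : ∀ n : ℕ, (b : ℂ) ^ (s + (n : ℂ) + 1) = (((b : ℝ) ^ (σ + (n : ℝ) + 1) : ℝ) : ℂ) := by
    intro n
    rw [Complex.cpow_def_of_ne_zero hbne]
    have hlogb : Complex.log (b : ℂ) = ((Real.log b : ℝ) : ℂ) := (Complex.ofReal_log hb0.le).symm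
    rw [hlogb, hs]
    have hexp : ((Real.log b : ℝ) : ℂ) *
        ((σ : ℂ) + 2 * Real.pi * Complex.I * (k : ℂ) / (Real.log b : ℂ) + (n : ℂ) + 1) =
        ((Real.log b * (σ + (n : ℝ) + 1) : ℝ) : ℂ) + (k : ℂ) * (2 * Real.pi * Complex.I) := by
      have hlogCne : Complex.log (b : ℂ) ≠ 0 := by rw [hlogb]; exact_mod_cast hlog
      push_cast
      field_simp [hlogCne]
      ring
    rw [hexp, Complex.exp_add, Complex.exp_int_mul_two_pi_mul_I, mul_one,
      ← Complex.ofReal_exp, ← Real.rpow_def_of_pos hb0]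
  have hkey := cstar_key b σ s hpow m
  have hPpos : (0 : ℝ) < ∏ i ∈ range m, (σ + 1 + (i : ℝ)) := by
    apply Finset.prod_pos
    intro i _
    have : (0 : ℝ) ≤ (i : ℝ) := Nat.cast_nonneg i
    linarith
  have hPc : (∏ i ∈ range m, ((σ : ℂ) + 1 + (i : ℂ))) =
      ((∏ i ∈ range m, (σ + 1 + (i : ℝ)) : ℝ) : ℂ) := by push_cast; rfl
  rw [hPc] at hkey
  have hn := congrArg (fun z : ℂ => ‖z‖) hkey
  simp only [norm_mul, Complex.norm_real, Real.norm_eq_abs] at hn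
  rw [abs_of_pos hPpos, abs_of_nonneg (cstarR_nonneg b hb σ hσ m)] at hn
  rw [eq_comm, div_mul_eq_mul_div, div_eq_iff (ne_of_gt hPpos), eq_comm]
  linarith [hn]
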